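/- arXiv:0708.0756 — 2 statements merged into one kernel-verified Lean document; each statement's English description precedes it below -/
import Mathlib

section
/- Let p > 1, C > 0, α > 0, and z as above (even blow-up solution of z'' = C z^p on (-α,α)). Then lim_{t→α⁻} (α - t)^{2/(p-1)} z(t) = (2(p+1)/(C(p-1)²))^{1/(p-1)}. -/
open Real Set Filter Topology

/-- Keller–Osserman blow-up rate for the even blow-up solution of `z'' = C z^p`
on `(-α, α)`: `lim_{t→α⁻} (α - t)^{2/(p-1)} z(t) = (2(p+1)/(C(p-1)²))^{1/(p-1)}`. -/
theorem stmt_11 (p C α : ℝ) (hp : 1 < p) (hC : 0 < C) (hα : 0 < α)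
    (z z' : ℝ → ℝ)
    (hpos : ∀ t ∈ Ioo (-α) α, 0 < z t)
    (heven : ∀ t, z (-t) = z t)
    (hz' : ∀ t ∈ Ioo (-α) α, HasDerivAt z (z' t) t)
    (hz'' : ∀ t ∈ Ioo (-α) α, HasDerivAt z' (C * (z t) ^ p) t)
    (hblow : Tendsto z (nhdsWithin α (Iio α)) atTop) :
    Tendsto (fun t => (α - t) ^ (2 / (p - 1)) * z t) (nhdsWithin α (Iio α))
      (nhds ((2 * (p + 1) / (C * (p - 1) ^ 2)) ^ ((1 : ℝ) / (p - 1)))) := by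
  have hp1 : (0:ℝ) < p - 1 := by linarith
  set q : ℝ := p + 1 with hqdef
  have hq : (0:ℝ) < q := by rw [hqdef]; linarith
  set m : ℝ := (p - 1) / 2 with hmdef
  have hm : 0 < m := by rw [hmdef]; linarith
  set D : ℝ := 2 * C / q with hDdef
  have hD : 0 < D := by rw [hDdef]; positivity
  have hmem0 : (0:ℝ) ∈ Ioo (-α) α := ⟨by linarith, hα⟩
  have hz0 : 0 < z 0 := hpos 0 hmem0
  -- z'(0) = 0
  have hz'0 : z' 0 = 0 := by
    have h1 : HasDerivAt (fun t : ℝ => z (-t)) (z' 0 * (-1)) 0 := by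
      have h0 : HasDerivAt z (z' 0) ((fun t : ℝ => -t) 0) := by
        simpa using hz' 0 hmem0
      exact h0.comp 0 (hasDerivAt_neg' 0)
    have h2 : HasDerivAt z (-(z' 0)) 0 := by
      have he : (fun t : ℝ => z (-t)) = z := funext heven
      rw [he] at h1
      simpa using h1
    have := (hz' 0 hmem0).unique h2
    linarith
  -- first integral
  set E : ℝ → ℝ := fun s => (z' s) ^ 2 - D * (z s) ^ q with hEdef
  have key : ∀ t ∈ Ioo (-α) α, HasDerivAt E 0 t := by
    intro t ht
    have h1 : HasDerivAt (fun s => (z' s) ^ 2) (2 * z' t ^ 1 * (C * z t ^ p)) t := by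
      simpa using (hz'' t ht).fun_pow 2
    have h2 : HasDerivAt (fun s => (z s) ^ q) (z' t * q * z t ^ (q - 1)) t :=
      (hz' t ht).rpow_const (Or.inl (hpos t ht).ne')
    have h3 := h1.sub (h2.const_mul D)
    refine h3.congr_deriv ?_
    have hq1 : q - 1 = p := by rw [hqdef]; ring
    rw [hq1, hDdef]
    field_simp
    ring
  have hconst : ∀ t ∈ Ioo (-α) α, (z' t) ^ 2 = D * ((z t) ^ q - (z 0) ^ q) := by
    intro t ht
    have hdiff : DifferentiableOn ℝ E (Ioo (-α) α) := fun s hs =>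
      ((key s hs).differentiableAt).differentiableWithinAt
    have hc := (convex_Ioo (-α) α).is_const_of_fderivWithin_eq_zero hdiff
      (fun s hs => by
        rw [fderivWithin_of_isOpen isOpen_Ioo hs]
        have h0 := (key s hs).hasFDerivAt
        rw [show (ContinuousLinearMap.toSpanSingleton ℝ (0:ℝ)) = 0 by
          ext; simp] at h0
        exact h0.fderiv) ht hmem0
    have : (z' t) ^ 2 - D * (z t) ^ q = (z' 0) ^ 2 - D * (z 0) ^ q := hc
    rw [hz'0] at this
    nlinarith [this]
  -- z' positive on (0, α)
  have hmono : StrictMonoOn z' (Ioo (-α) α) := by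
    apply strictMonoOn_of_deriv_pos (convex_Ioo (-α) α)
    · exact fun s hs => ((hz'' s hs).continuousAt).continuousWithinAt
    · intro s hs
      rw [interior_Ioo] at hs
      rw [(hz'' s hs).deriv]
      exact mul_pos hC (rpow_pos_of_pos (hpos s hs) p)
  have hsub : Ioo (0:ℝ) α ⊆ Ioo (-α) α := fun s hs => ⟨by linarith [hs.1], hs.2⟩
  have hz'pos : ∀ t ∈ Ioo (0:ℝ) α, 0 < z' t := by
    intro t ht
    have := hmono hmem0 (hsub ht) ht.1
    rwa [hz'0] at this
  have hIoo : Ioo (0:ℝ) α ∈ 𝓝[<] α := Ioo_mem_nhdsLT_of_mem ⟨hα, le_refl α⟩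
  -- the key limit of -w'
  set L : ℝ := m * Real.sqrt D with hLdef
  have hL : 0 < L := by rw [hLdef]; positivity
  have hkey : Tendsto (fun t => m * z t ^ (-m - 1) * z' t) (𝓝[<] α) (𝓝 L) := by
    have hpt : ∀ t ∈ Ioo (0:ℝ) α,
        m * z t ^ (-m - 1) * z' t = m * Real.sqrt (D * (1 - (z 0) ^ q * z t ^ (-q))) := by
      intro t ht
      have ht' := hsub ht
      have hz : 0 < z t := hpos t ht'
      have hzq : (z' t) = Real.sqrt (D * ((z t) ^ q - (z 0) ^ q)) := by
        rw [← hconst t ht', Real.sqrt_sq (hz'pos t ht).le]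
      have e0 : (0:ℝ) ≤ z t ^ (-m - 1) := (rpow_pos_of_pos hz _).le
      have e1 : (z t ^ (-m - 1)) ^ 2 = z t ^ (-q) := by
        rw [← Real.rpow_natCast (z t ^ (-m - 1)) 2, ← Real.rpow_mul hz.le]
        congr 1
        rw [hmdef, hqdef]
        push_cast
        ring
      have e2 : z t ^ (-q) * z t ^ q = 1 := by
        rw [← Real.rpow_add hz]
        simp
      rw [hzq, ← Real.sqrt_sq e0, mul_assoc, ← Real.sqrt_mul (sq_nonneg _), e1]
      congr 2
      linear_combination D * e2
    have t1 : Tendsto (fun t => z t ^ (-q)) (𝓝[<] α) (𝓝 0) :=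
      (tendsto_rpow_neg_atTop hq).comp hblow
    have t2 : Tendsto (fun t => m * Real.sqrt (D * (1 - (z 0) ^ q * z t ^ (-q)))) (𝓝[<] α)
        (𝓝 (m * Real.sqrt (D * (1 - (z 0) ^ q * 0)))) := by
      apply Tendsto.const_mul
      apply (Real.continuous_sqrt.tendsto _).comp
      exact (tendsto_const_nhds.sub (t1.const_mul _)).const_mul D
    have hLeq : m * Real.sqrt (D * (1 - (z 0) ^ q * 0)) = L := by
      rw [hLdef]; norm_num
    rw [hLeq] at t2
    exact t2.congr' (by filter_upwards [hIoo] with t ht using (hpt t ht).symm)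
  -- L'Hôpital
  have hlh : Tendsto (fun t => z t ^ (-m) / (α - t)) (𝓝[<] α) (𝓝 L) := by
    apply HasDerivAt.lhopital_zero_nhdsLT
      (f' := fun t => z' t * (-m) * z t ^ (-m - 1)) (g' := fun _ => (-1 : ℝ))
    · filter_upwards [hIoo] with t ht
      exact (hz' t (hsub ht)).rpow_const (Or.inl (hpos t (hsub ht)).ne')
    · filter_upwards with t
      simpa using (hasDerivAt_id t).const_sub α
    · filter_upwards with t
      norm_num
    · exact (tendsto_rpow_neg_atTop hm).comp hblow
    · have : Tendsto (fun t => α - t) (𝓝 α) (𝓝 (α - α)) :=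
        (continuous_const.sub continuous_id).tendsto α
      simpa using this.mono_left nhdsWithin_le_nhds
    · apply hkey.congr
      intro t
      field_simp
  -- conclude
  have hcomp : Tendsto (fun t => (z t ^ (-m) / (α - t)) ^ (-(1/m))) (𝓝[<] α)
      (𝓝 (L ^ (-(1/m)))) :=
    ((Real.continuousAt_rpow_const L _ (Or.inl hL.ne')).tendsto).comp hlh
  have hval : L ^ (-(1/m)) = (2 * (p + 1) / (C * (p - 1) ^ 2)) ^ ((1:ℝ) / (p - 1)) := by
    have hexp : -(1/m) = 2 * (-(1 / (p - 1))) := by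
      rw [hmdef]; field_simp
    have hL2 : L ^ (2:ℝ) = C * (p - 1) ^ 2 / (2 * (p + 1)) := by
      rw [Real.rpow_two, hLdef, mul_pow, Real.sq_sqrt hD.le, hDdef, hmdef, hqdef]
      field_simp
    have hX : (0:ℝ) < C * (p - 1) ^ 2 / (2 * (p + 1)) := by positivity
    rw [hexp, Real.rpow_mul hL.le, hL2, Real.rpow_neg hX.le, ← Real.inv_rpow hX.le, inv_div]
  rw [← hval]
  apply hcomp.congr'
  filter_upwards [hIoo] with t ht
  have ha : 0 < α - t := by linarith [ht.2]
  have hz : 0 < z t := hpos t (hsub ht)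
  have hwpos : (0:ℝ) ≤ z t ^ (-m) := (rpow_pos_of_pos hz _).le
  rw [Real.div_rpow hwpos ha.le, ← Real.rpow_mul hz.le, Real.rpow_neg ha.le, div_eq_mul_inv, inv_inv]
  have hme : -m * -(1/m) = 1 := by field_simp
  have hexp2 : (1:ℝ)/m = 2 / (p - 1) := by rw [hmdef]; field_simp
  rw [hme, Real.rpow_one, hexp2, mul_comm]
end

section
/- Let p > 1, N ≥ 1, β ∈ ℝ, and define g(s) = (∫₀^s r^{−(N-1)(p-1)/(p+3)} h(r)^{2/(p+3)} dr)^{−(p+3)/(p-1)} where h(r) = exp(−ω(r)/r²) and ω(r) = r^{2−α₀} with 0 < α₀ < 2 and (N-1)(p-1)/(p+3) < 1. Then for every ν₀ > 0 there exists s₀ > 0 such that for all s ∈ (0, s₀): exp( (2(1−ν₀)/(p-1)) · ω(s)/s² ) ≤ g(s) ≤ exp( (2(1+ν₀)/(p-1)) · ω(s)/s² ). -/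
open Real Set intervalIntegral MeasureTheory

set_option maxHeartbeats 2000000 in
/-- Two-sided asymptotic estimate of
`g(s) = (∫₀^s r^{−(N-1)(p-1)/(p+3)} h(r)^{2/(p+3)} dr)^{−(p+3)/(p-1)}` with
`h(r) = exp(−ω(r)/r²)`, `ω(r) = r^{2−α₀}`: for every `ν₀ > 0` there is `s₀ > 0`
such that for all `s ∈ (0,s₀)`,
`exp((2(1−ν₀)/(p-1)) ω(s)/s²) ≤ g(s) ≤ exp((2(1+ν₀)/(p-1)) ω(s)/s²)`. -/
theorem stmt_14 (N : ℕ) (hN : 1 ≤ N) (p α₀ : ℝ) (hp : 1 < p)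
    (hα₀ : 0 < α₀) (hα₀' : α₀ < 2)
    (hconv : (N - 1 : ℝ) * (p - 1) / (p + 3) < 1)
    (ω h g : ℝ → ℝ)
    (hω : ∀ r, ω r = r ^ (2 - α₀))
    (hh : ∀ r, h r = Real.exp (-(ω r) / r ^ 2))
    (hg : ∀ s, g s = (∫ r in (0 : ℝ)..s,
        r ^ (-(N - 1 : ℝ) * (p - 1) / (p + 3)) * (h r) ^ (2 / (p + 3)))
          ^ (-(p + 3) / (p - 1))) :
    ∀ ν₀ > 0, ∃ s₀ > 0, ∀ s ∈ Ioo (0 : ℝ) s₀,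
      Real.exp ((2 * (1 - ν₀) / (p - 1)) * (ω s / s ^ 2)) ≤ g s ∧
        g s ≤ Real.exp ((2 * (1 + ν₀) / (p - 1)) * (ω s / s ^ 2)) := by
  intro ν₀ hν₀
  have hp1 : (0:ℝ) < p - 1 := by linarith
  have hp3 : (0:ℝ) < p + 3 := by linarith
  set a : ℝ := ((N:ℝ) - 1) * (p - 1) / (p + 3) with ha_def
  have hN1 : (0:ℝ) ≤ (N:ℝ) - 1 := by
    have : (1:ℝ) ≤ (N:ℝ) := by exact_mod_cast hN
    linarith
  have ha0 : 0 ≤ a := div_nonneg (mul_nonneg hN1 hp1.le) hp3.le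
  have ha1 : a < 1 := hconv
  have h1a : 0 < 1 - a := by linarith
  set c : ℝ := 2 / (p + 3) with hc_def
  have hc : 0 < c := by positivity
  set κ : ℝ := c * ν₀ / 2 with hκ_def
  have hκ : 0 < κ := by positivity
  set θ : ℝ := (1 + ν₀ / 2) ^ (-α₀⁻¹) with hθ_def
  have h1ν : (1:ℝ) < 1 + ν₀ / 2 := by linarith
  have hθpos : 0 < θ := Real.rpow_pos_of_pos (by linarith) _
  have hθ1 : θ < 1 :=
    Real.rpow_lt_one_of_one_lt_of_neg h1ν (neg_lt_zero.mpr (inv_pos.mpr hα₀))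
  have h1θ : 0 < 1 - θ := by linarith
  have hθpow : θ ^ (-α₀) = 1 + ν₀ / 2 := by
    rw [hθ_def, ← Real.rpow_mul (by linarith : (0:ℝ) ≤ 1 + ν₀ / 2),
      show -α₀⁻¹ * -α₀ = 1 by field_simp, Real.rpow_one]
  -- the concrete integrand
  set f : ℝ → ℝ := fun r =>
    r ^ (-((N:ℝ) - 1) * (p - 1) / (p + 3)) *
      (Real.exp (-(r ^ (2 - α₀)) / r ^ 2)) ^ (2 / (p + 3)) with hf_def
  have hgf : ∀ s, g s = (∫ r in (0:ℝ)..s, f r) ^ (-(p + 3) / (p - 1)) := by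
    intro s
    simp only [hg, hh, hω, hf_def, hc_def]
  have hfr : ∀ r : ℝ, 0 < r → f r = r ^ (-a) * Real.exp (-(c * r ^ (-α₀))) := by
    intro r hr
    have h2 : r ^ (2:ℕ) = r ^ (2:ℝ) := by
      rw [← Real.rpow_natCast]; norm_num
    have hexp : -(r ^ (2 - α₀)) / r ^ (2:ℕ) = -(r ^ (-α₀)) := by
      rw [h2, neg_div, ← Real.rpow_sub hr]
      norm_num
    simp only [hf_def]
    rw [hexp, ← Real.exp_mul]
    congr 1
    · congr 1; rw [ha_def]; ring
    · rw [hc_def]; ring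
  have hmeas : Measurable f := by
    simp only [hf_def]
    fun_prop
  -- integrability
  have hfint : ∀ s : ℝ, 0 < s → IntervalIntegrable f volume 0 s := by
    intro s hs
    have hbound : IntervalIntegrable (fun r : ℝ => r ^ (-a)) volume 0 s :=
      intervalIntegral.intervalIntegrable_rpow' (by linarith)
    apply hbound.mono_fun hmeas.aestronglyMeasurable
    filter_upwards [MeasureTheory.ae_restrict_mem measurableSet_uIoc] with r hr
    rw [Set.uIoc_of_le hs.le] at hr
    have hr0 : 0 < r := hr.1
    rw [hfr r hr0, Real.norm_eq_abs, Real.norm_eq_abs]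
    have hra : (0:ℝ) ≤ r ^ (-a) := Real.rpow_nonneg hr0.le _
    have hexp1 : Real.exp (-(c * r ^ (-α₀))) ≤ 1 := by
      apply Real.exp_le_one_iff.mpr ?_
      have : (0:ℝ) ≤ c * r ^ (-α₀) := mul_nonneg hc.le (Real.rpow_nonneg hr0.le _)
      linarith
    rw [abs_of_nonneg (mul_nonneg hra (Real.exp_pos _).le), abs_of_nonneg hra]
    nlinarith [Real.exp_pos (-(c * r ^ (-α₀)))]
  -- two eventual smallness conditions
  have htend0 : Filter.Tendsto (fun s : ℝ => s ^ (1 - a)) (nhdsWithin 0 (Ioi 0)) (nhds 0) := by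
    have h0 := (Real.continuousAt_rpow_const 0 (1 - a) (Or.inr h1a.le)).tendsto
    rw [Real.zero_rpow (ne_of_gt h1a)] at h0
    exact h0.mono_left nhdsWithin_le_nhds
  have hUev : ∀ᶠ s in nhdsWithin (0:ℝ) (Ioi 0), s ^ (1 - a) ≤ 1 - a :=
    htend0.eventually_le_const h1a
  have h1 : Filter.Tendsto (fun s : ℝ => s ^ (-α₀)) (nhdsWithin 0 (Ioi 0)) Filter.atTop := by
    have h2 : Filter.Tendsto (fun s : ℝ => (s⁻¹) ^ α₀) (nhdsWithin 0 (Ioi 0)) Filter.atTop :=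
      (tendsto_rpow_atTop hα₀).comp tendsto_inv_nhdsGT_zero
    apply h2.congr'
    filter_upwards [self_mem_nhdsWithin] with s hs
    rw [Real.inv_rpow (le_of_lt hs), ← Real.rpow_neg (le_of_lt hs)]
  have h4 : Filter.Tendsto (fun s : ℝ => Real.exp (κ * s ^ (-α₀)) * s ^ (1 - a))
      (nhdsWithin 0 (Ioi 0)) Filter.atTop := by
    have h3 := (tendsto_exp_mul_div_rpow_atTop ((1 - a) / α₀) κ hκ).comp h1
    apply h3.congr'
    filter_upwards [self_mem_nhdsWithin] with s hs
    have hs0 : (0:ℝ) < s := hs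
    simp only [Function.comp]
    rw [← Real.rpow_mul hs0.le, show -α₀ * ((1 - a) / α₀) = -(1 - a) by field_simp,
      Real.rpow_neg hs0.le (1 - a), div_inv_eq_mul]
  have hLev : ∀ᶠ s in nhdsWithin (0:ℝ) (Ioi 0),
      Real.exp (-(κ * s ^ (-α₀))) ≤ (1 - θ) * s ^ (1 - a) := by
    filter_upwards [h4.eventually_ge_atTop ((1 - θ)⁻¹), self_mem_nhdsWithin] with s hs4 hs
    have hs0 : (0:ℝ) < s := hs
    have hE : (0:ℝ) < Real.exp (κ * s ^ (-α₀)) := Real.exp_pos _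
    have hS : (0:ℝ) < s ^ (1 - a) := Real.rpow_pos_of_pos hs0 _
    rw [Real.exp_neg, inv_eq_one_div, div_le_iff₀ hE]
    have key := mul_le_mul_of_nonneg_left hs4 h1θ.le
    rw [mul_inv_cancel₀ h1θ.ne'] at key
    nlinarith
  have hall := hUev.and hLev
  rw [eventually_nhdsWithin_iff, Metric.eventually_nhds_iff] at hall
  obtain ⟨ε, hε, hball⟩ := hall
  refine ⟨ε, hε, ?_⟩
  intro s hs
  obtain ⟨hs0, hsε⟩ := hs
  have hcond := hball (show dist s 0 < ε by
    rw [Real.dist_eq, sub_zero, abs_of_pos hs0]; exact hsε) hs0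
  obtain ⟨hU, hL⟩ := hcond
  -- notation
  set X : ℝ := s ^ (-α₀) with hX_def
  have hX0 : 0 < X := Real.rpow_pos_of_pos hs0 _
  have hωs : ω s / s ^ 2 = X := by
    have h2 : s ^ (2:ℕ) = s ^ (2:ℝ) := by rw [← Real.rpow_natCast]; norm_num
    rw [hω, h2, ← Real.rpow_sub hs0, hX_def]
    norm_num
  -- integral over Ioc
  have hIoc : (∫ r in (0:ℝ)..s, f r) = ∫ r in Ioc (0:ℝ) s, f r :=
    intervalIntegral.integral_of_le hs0.le
  set F : ℝ := ∫ r in Ioc (0:ℝ) s, f r with hF_def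
  have hintIoc : MeasureTheory.IntegrableOn f (Ioc 0 s) := (hfint s hs0).1
  clear_value X F
  -- Upper bound on F
  have hFupper : F ≤ Real.exp (-(c * (1 - ν₀) * X)) := by
    have hb2 : IntervalIntegrable (fun r : ℝ => Real.exp (-(c * X)) * r ^ (-a)) volume 0 s :=
      (intervalIntegral.intervalIntegrable_rpow' (by linarith)).const_mul _
    have step1 : F ≤ ∫ r in Ioc (0:ℝ) s, Real.exp (-(c * X)) * r ^ (-a) := by
      rw [hF_def]
      apply MeasureTheory.setIntegral_mono_on hintIoc hb2.1 measurableSet_Ioc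
      intro r hr
      have hr0 : 0 < r := hr.1
      rw [hfr r hr0, mul_comm (Real.exp (-(c * X)))]
      apply mul_le_mul_of_nonneg_left ?_ (Real.rpow_nonneg hr0.le _)
      apply Real.exp_le_exp.mpr
      have hXr : X ≤ r ^ (-α₀) := by
        rw [hX_def]
        exact Real.rpow_le_rpow_of_nonpos hr0 hr.2 (neg_nonpos.mpr hα₀.le)
      nlinarith
    have step2 : (∫ r in Ioc (0:ℝ) s, Real.exp (-(c * X)) * r ^ (-a))
        = Real.exp (-(c * X)) * (s ^ (1 - a) / (1 - a)) := by
      rw [MeasureTheory.integral_const_mul]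
      congr 1
      rw [← intervalIntegral.integral_of_le hs0.le,
        integral_rpow (Or.inl (by linarith)),
        Real.zero_rpow (by intro hcon; rw [show -a + 1 = 1 - a by ring] at hcon; linarith),
        show -a + 1 = 1 - a by ring, sub_zero]
    have step3 : Real.exp (-(c * X)) * (s ^ (1 - a) / (1 - a)) ≤ Real.exp (-(c * X)) := by
      have hle1 : s ^ (1 - a) / (1 - a) ≤ 1 := by
        rw [div_le_one h1a]; exact hU
      have hnn : 0 ≤ s ^ (1 - a) / (1 - a) :=
        div_nonneg (Real.rpow_nonneg hs0.le _) h1a.le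
      calc Real.exp (-(c * X)) * (s ^ (1 - a) / (1 - a))
          ≤ Real.exp (-(c * X)) * 1 :=
            mul_le_mul_of_nonneg_left hle1 (Real.exp_pos _).le
        _ = Real.exp (-(c * X)) := mul_one _
    have step4 : Real.exp (-(c * X)) ≤ Real.exp (-(c * (1 - ν₀) * X)) := by
      apply Real.exp_le_exp.mpr
      have hnn : 0 ≤ c * ν₀ * X := by positivity
      nlinarith
    exact (step1.trans_eq step2).trans (step3.trans step4)
  -- Lower bound on F
  have hFlower : Real.exp (-(c * (1 + ν₀) * X)) ≤ F := by
    have hθs : 0 < θ * s := mul_pos hθpos hs0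
    have hsub : Ioc (θ * s) s ⊆ Ioc 0 s := fun r hr => ⟨lt_trans hθs hr.1, hr.2⟩
    have hfnn : 0 ≤ᵐ[MeasureTheory.volume.restrict (Ioc (0:ℝ) s)] f := by
      filter_upwards [MeasureTheory.ae_restrict_mem measurableSet_Ioc] with r hr
      rw [hfr r hr.1]
      exact mul_nonneg (Real.rpow_nonneg hr.1.le _) (Real.exp_pos _).le
    have step1 : (∫ r in Ioc (θ * s) s, f r) ≤ F := by
      rw [hF_def]
      exact MeasureTheory.setIntegral_mono_set hintIoc hfnn (HasSubset.Subset.eventuallyLE hsub)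
    set K : ℝ := s ^ (-a) * Real.exp (-(c * (1 + ν₀ / 2) * X)) with hK_def
    have step2 : (∫ _r in Ioc (θ * s) s, K) ≤ ∫ r in Ioc (θ * s) s, f r := by
      apply MeasureTheory.setIntegral_mono_on
        ((MeasureTheory.integrableOn_const_iff).mpr (Or.inr (by
          rw [Real.volume_Ioc]; exact ENNReal.ofReal_lt_top)))
        (hintIoc.mono_set hsub) measurableSet_Ioc
      intro r hr
      have hr0 : 0 < r := lt_trans hθs hr.1
      rw [hfr r hr0, hK_def]
      have h1' : s ^ (-a) ≤ r ^ (-a) :=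
        Real.rpow_le_rpow_of_nonpos hr0 hr.2 (neg_nonpos.mpr ha0)
      have h2' : Real.exp (-(c * (1 + ν₀ / 2) * X)) ≤ Real.exp (-(c * r ^ (-α₀))) := by
        apply Real.exp_le_exp.mpr
        have hrθs : r ^ (-α₀) ≤ (θ * s) ^ (-α₀) :=
          Real.rpow_le_rpow_of_nonpos hθs hr.1.le (neg_nonpos.mpr hα₀.le)
        have hθsX : (θ * s) ^ (-α₀) = (1 + ν₀ / 2) * X := by
          rw [Real.mul_rpow hθpos.le hs0.le, hθpow, hX_def]
        rw [hθsX] at hrθs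
        nlinarith
      have := mul_le_mul h1' h2' (Real.exp_pos _).le (Real.rpow_nonneg hr0.le _)
      linarith
    have step3 : (∫ _r in Ioc (θ * s) s, K) = (s - θ * s) * K := by
      rw [MeasureTheory.setIntegral_const, Real.volume_real_Ioc_of_le (by nlinarith), smul_eq_mul]
    have hss : s ^ (1 - a) = s * s ^ (-a) := by
      rw [show (1:ℝ) - a = 1 + -a by ring, Real.rpow_add hs0, Real.rpow_one]
    have step4 : Real.exp (-(c * (1 + ν₀) * X)) ≤ (s - θ * s) * K := by
      have hexpand : (s - θ * s) * K
          = ((1 - θ) * s ^ (1 - a)) * Real.exp (-(c * (1 + ν₀ / 2) * X)) := by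
        rw [hK_def, hss]; ring
      rw [hexpand]
      have hLX : Real.exp (-(κ * X)) ≤ (1 - θ) * s ^ (1 - a) := hL
      calc Real.exp (-(c * (1 + ν₀) * X))
          = Real.exp (-(κ * X)) * Real.exp (-(c * (1 + ν₀ / 2) * X)) := by
            rw [← Real.exp_add]; congr 1; rw [hκ_def]; ring
        _ ≤ ((1 - θ) * s ^ (1 - a)) * Real.exp (-(c * (1 + ν₀ / 2) * X)) :=
            mul_le_mul_of_nonneg_right hLX (Real.exp_pos _).le
    exact (step4.trans_eq step3.symm).trans (step2.trans step1)
  have hF0 : 0 < F := lt_of_lt_of_le (Real.exp_pos _) hFlower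
  -- conclude for g
  have hgs : g s = F ^ (-(p + 3) / (p - 1)) := by rw [hgf s, hIoc]
  have hq : -(p + 3) / (p - 1) ≤ 0 := by
    apply div_nonpos_of_nonpos_of_nonneg <;> linarith
  constructor
  · -- lower bound for g from upper bound of F
    rw [hgs, hωs]
    have := Real.rpow_le_rpow_of_nonpos hF0 hFupper hq
    refine le_trans (le_of_eq ?_) this
    rw [← Real.exp_mul]
    congr 1
    rw [hc_def]
    field_simp
  · rw [hgs, hωs]
    have := Real.rpow_le_rpow_of_nonpos (Real.exp_pos _) hFlower hq
    refine le_trans this (le_of_eq ?_)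
    rw [← Real.exp_mul]
    congr 1
    rw [hc_def]
    field_simp
end
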